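/- Suppose (x_n) is a sequence in the unit sphere of a Banach space X such that for all k ≤ n_1 < ... < n_k and all signs ε_i ∈ {-1,0,1}, A·‖Σ ε_i s_i‖_{c_0} ≤ ‖Σ_{i=1}^k ε_i x_{n_i}‖_X ≤ B·‖Σ ε_i s_i‖_{c_0}, where (s_i) is the summing basis of c_0 and A, B > 0. Then the maps g_k: [ℕ]^k → X defined by g_k(n) = Σ_{i=1}^k x_{2k+n_i} satisfy (A/2)·d_K(n,m) ≤ ‖g_k(n) - g_k(m)‖ ≤ B·d_K(n,m) for all n, m ∈ [ℕ]^k; i.e., the interlaced graphs equi-Lipschitz embed into X. -/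

import Mathlib

open Filter Finset

/-- The interlacing graph distance: `d_K(n,m) = sup { | |n ∩ S| - |m ∩ S| | : S a segment of ℕ }`. -/
noncomputable def dseg (n m : Finset ℕ) : ℕ :=
  ⨆ a : ℕ, ⨆ b : ℕ,
    (((n ∩ Finset.Icc a b).card : ℤ) - ((m ∩ Finset.Icc a b).card : ℤ)).natAbs

/-- The `c₀` (sup) norm of `Σ_{i=1}^k ε_i s_i`, where `(s_i)` is the summing basis of `c₀`:
the `j`-th coordinate is `Σ_{i ≥ j} ε_i`. -/
noncomputable def c0SummingNorm {k : ℕ} (ε : Fin k → ℝ) : ℝ :=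
  ⨆ j : Fin k, |∑ i ∈ Finset.univ.filter (fun i => j ≤ i), ε i|

section Aux

variable (n m : Finset ℕ)

/-- Tail count difference. -/
noncomputable def Tdiff (a : ℕ) : ℤ :=
  ((n.filter (fun c => a ≤ c)).card : ℤ) - ((m.filter (fun c => a ≤ c)).card : ℤ)

lemma filter_split (s : Finset ℕ) {a b : ℕ} (h : a ≤ b + 1) :
    s.filter (fun c => a ≤ c) = (s ∩ Finset.Icc a b) ∪ s.filter (fun c => b + 1 ≤ c) := by
  ext c
  by_cases hc : c ∈ s <;>
    simp only [Finset.mem_filter, Finset.mem_union, Finset.mem_inter, Finset.mem_Icc, hc,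
      true_and, false_and, and_false, or_self, false_or, and_true] <;> omega

lemma card_inter_Icc (s : Finset ℕ) {a b : ℕ} (h : a ≤ b + 1) :
    ((s ∩ Finset.Icc a b).card : ℤ) =
      ((s.filter (fun c => a ≤ c)).card : ℤ) - ((s.filter (fun c => b + 1 ≤ c)).card : ℤ) := by
  have hd : Disjoint (s ∩ Finset.Icc a b) (s.filter (fun c => b + 1 ≤ c)) := by
    rw [Finset.disjoint_left]
    intro c hc hc'
    simp only [Finset.mem_inter, Finset.mem_Icc] at hc
    simp only [Finset.mem_filter] at hc'
    omega
  have := Finset.card_union_of_disjoint hd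
  rw [← filter_split s h] at this
  rw [this]
  push_cast
  ring

lemma delta_eq (a b : ℕ) (h : a ≤ b + 1) :
    ((n ∩ Finset.Icc a b).card : ℤ) - ((m ∩ Finset.Icc a b).card : ℤ)
      = Tdiff n m a - Tdiff n m (b + 1) := by
  rw [card_inter_Icc n h, card_inter_Icc m h, Tdiff, Tdiff]
  ring

end Aux

/-- If `(x_n)` is a sequence in the unit sphere of a Banach space `X` generating a spreading
model equivalent (with constants `A, B`) to the summing basis of `c₀`, then the maps
`g_k(n) = Σ_{i=1}^k x_{2k+n_i}` satisfy
`(A/2)·d_K(n,m) ≤ ‖g_k(n) - g_k(m)‖ ≤ B·d_K(n,m)`;  i.e., the interlaced graphs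
equi-Lipschitz embed into `X`. -/
theorem spreading_summing_equilipschitz
    (X : Type*) [NormedAddCommGroup X] [NormedSpace ℝ X] [CompleteSpace X]
    (x : ℕ → X) (hsph : ∀ n, ‖x n‖ = 1) (A B : ℝ) (hA : 0 < A) (hB : 0 < B)
    (hspread : ∀ (k : ℕ) (nn : Fin k → ℕ) (ε : Fin k → ℝ),
      StrictMono nn → (∀ i, k ≤ nn i) → (∀ i, ε i = -1 ∨ ε i = 0 ∨ ε i = 1) →
      A * c0SummingNorm ε ≤ ‖∑ i, ε i • x (nn i)‖ ∧
        ‖∑ i, ε i • x (nn i)‖ ≤ B * c0SummingNorm ε) :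
    ∀ (k : ℕ) (n m : Finset ℕ), n.card = k → m.card = k →
      (A / 2) * (dseg n m : ℝ) ≤ ‖(∑ j ∈ n, x (2 * k + j)) - ∑ j ∈ m, x (2 * k + j)‖ ∧
      ‖(∑ j ∈ n, x (2 * k + j)) - ∑ j ∈ m, x (2 * k + j)‖ ≤ B * (dseg n m : ℝ) := by
  classical
  intro k n m hn hm
  set u : Finset ℕ := n ∪ m with hu
  set K : ℕ := u.card with hK
  set nn : Fin K → ℕ := fun i => u.orderEmbOfFin rfl i with hnn
  have hnn_mem : ∀ i, nn i ∈ u := fun i => u.orderEmbOfFin_mem rfl i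
  have hnn_mono : StrictMono nn := (u.orderEmbOfFin rfl).strictMono
  have hnn_le : ∀ i j : Fin K, nn i ≤ nn j ↔ i ≤ j := fun i j =>
    (u.orderEmbOfFin rfl).le_iff_le
  have hnn_surj : ∀ c ∈ u, ∃ i, nn i = c := by
    intro c hc
    have : c ∈ Set.range (u.orderEmbOfFin rfl) := by
      rw [u.range_orderEmbOfFin rfl]; exact hc
    exact this
  set ε : Fin K → ℝ := fun i =>
    (if nn i ∈ n then (1:ℝ) else 0) - (if nn i ∈ m then (1:ℝ) else 0) with hε
  have hεval : ∀ i, ε i = -1 ∨ ε i = 0 ∨ ε i = 1 := by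
    intro i
    simp only [hε]
    split_ifs <;> norm_num
  by_cases hK0 : K = 0
  · have hu0 : u = ∅ := Finset.card_eq_zero.1 (hK ▸ hK0)
    have hnm0 : n ∪ m = ∅ := by rw [← hu]; exact hu0
    have hn0 : n = ∅ := (Finset.union_eq_empty.1 hnm0).1
    have hm0 : m = ∅ := (Finset.union_eq_empty.1 hnm0).2
    subst hn0; subst hm0
    have hd0 : dseg ∅ ∅ = 0 := by
      have : ∀ a b : ℕ, (((∅ ∩ Finset.Icc a b).card : ℤ)
          - (((∅: Finset ℕ) ∩ Finset.Icc a b).card : ℤ)).natAbs = 0 := by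
        intro a b; simp
      rw [dseg]
      simp only [this]
      rw [ciSup_const, ciSup_const]
    rw [hd0]
    norm_num
  have hKpos : 0 < K := Nat.pos_of_ne_zero hK0
  haveI hFinNe : Nonempty (Fin K) := ⟨⟨0, hKpos⟩⟩
  set T : ℕ → ℤ := Tdiff n m with hT
  -- sum over the filter equals tail difference
  have hsub_n : n ⊆ u := Finset.subset_union_left
  have hsub_m : m ⊆ u := Finset.subset_union_right
  have cardbij : ∀ (s : Finset ℕ), s ⊆ u → ∀ j : Fin K,
      (Finset.univ.filter (fun i : Fin K => j ≤ i ∧ nn i ∈ s)).card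
        = (s.filter (fun c => nn j ≤ c)).card := by
    intro s hs j
    apply Finset.card_nbij (i := nn)
    · intro i hi
      simp only [Finset.mem_coe, Finset.mem_filter, Finset.mem_univ, true_and] at hi ⊢
      exact ⟨hi.2, (hnn_le j i).2 hi.1⟩
    · intro i _ i' _ h
      exact hnn_mono.injective h
    · intro c hc
      simp only [Finset.coe_filter, Set.mem_setOf_eq, Finset.mem_filter] at hc
      obtain ⟨i, rfl⟩ := hnn_surj c (hs hc.1)
      refine ⟨i, ?_, rfl⟩
      simp only [Finset.coe_filter, Set.mem_setOf_eq, Finset.mem_univ, true_and]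
      exact ⟨(hnn_le j i).1 hc.2, hc.1⟩
  have hL1 : ∀ j : Fin K,
      ∑ i ∈ Finset.univ.filter (fun i => j ≤ i), ε i = (T (nn j) : ℝ) := by
    intro j
    have h1 : ∑ i ∈ Finset.univ.filter (fun i : Fin K => j ≤ i), ε i
        = ((Finset.univ.filter (fun i : Fin K => j ≤ i ∧ nn i ∈ n)).card : ℝ)
          - ((Finset.univ.filter (fun i : Fin K => j ≤ i ∧ nn i ∈ m)).card : ℝ) := by
      rw [Finset.sum_sub_distrib, Finset.sum_boole, Finset.sum_boole,
        Finset.filter_filter, Finset.filter_filter]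
    rw [h1, cardbij n hsub_n j, cardbij m hsub_m j, hT, Tdiff]
    push_cast
    ring
  -- every tail difference is 0 or equals one at a point of u
  have hL3 : ∀ a : ℕ, T a = 0 ∨ ∃ j : Fin K, T a = T (nn j) := by
    intro a
    by_cases hex : ∃ c ∈ u, a ≤ c
    · right
      obtain ⟨c, hc, hac⟩ := hex
      have hsne : (Finset.univ.filter (fun i : Fin K => a ≤ nn i)).Nonempty := by
        obtain ⟨i, rfl⟩ := hnn_surj c hc
        exact ⟨i, by simp [hac]⟩
      set j := (Finset.univ.filter (fun i : Fin K => a ≤ nn i)).min' hsne with hj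
      have hjmem : a ≤ nn j := by
        have := Finset.min'_mem _ hsne
        simpa using this
      have hjmin : ∀ i, a ≤ nn i → j ≤ i := by
        intro i hi
        exact Finset.min'_le _ _ (by simp [hi])
      have hfilter : ∀ (s : Finset ℕ), s ⊆ u →
          s.filter (fun c => a ≤ c) = s.filter (fun c => nn j ≤ c) := by
        intro s hs
        apply Finset.filter_congr
        intro c hc'
        obtain ⟨i, rfl⟩ := hnn_surj c (hs hc')
        constructor
        · intro h
          exact (hnn_le j i).2 (hjmin i h)
        · intro h
          exact le_trans hjmem h
      refine ⟨j, ?_⟩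
      rw [hT, Tdiff, Tdiff, hfilter n hsub_n, hfilter m hsub_m]
    · left
      push_neg at hex
      have h1 : n.filter (fun c => a ≤ c) = ∅ := by
        apply Finset.filter_eq_empty_iff.2
        intro c hc
        exact not_le.2 (hex c (hsub_n hc))
      have h2 : m.filter (fun c => a ≤ c) = ∅ := by
        apply Finset.filter_eq_empty_iff.2
        intro c hc
        exact not_le.2 (hex c (hsub_m hc))
      rw [hT, Tdiff, h1, h2]
      simp
  -- M : maximum of |T (nn j)|
  set M : ℕ := Finset.univ.sup (fun j : Fin K => (T (nn j)).natAbs) with hM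
  have hTa_le : ∀ a, (T a).natAbs ≤ M := by
    intro a
    rcases hL3 a with h | ⟨j, h⟩
    · simp [h]
    · rw [h, hM]
      exact Finset.le_sup (f := fun j : Fin K => (T (nn j)).natAbs) (Finset.mem_univ j)
  -- the interval count difference
  set f : ℕ → ℕ → ℕ := fun a b =>
    (((n ∩ Finset.Icc a b).card : ℤ) - ((m ∩ Finset.Icc a b).card : ℤ)).natAbs with hf
  have hdseg : dseg n m = ⨆ a, ⨆ b, f a b := rfl
  have hfab : ∀ a b, f a b
      = (((n ∩ Finset.Icc a b).card : ℤ) - ((m ∩ Finset.Icc a b).card : ℤ)).natAbs :=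
    fun a b => rfl
  have hf_le : ∀ a b, f a b ≤ n.card + m.card := by
    intro a b
    calc f a b ≤ (((n ∩ Finset.Icc a b).card : ℤ)).natAbs
        + (((m ∩ Finset.Icc a b).card : ℤ)).natAbs := Int.natAbs_sub_le _ _
      _ ≤ n.card + m.card := by
          simp only [Int.natAbs_natCast]
          exact Nat.add_le_add
            (Finset.card_le_card Finset.inter_subset_left)
            (Finset.card_le_card Finset.inter_subset_left)
  have hbdd_inner : ∀ a, BddAbove (Set.range (fun b => f a b)) := by
    intro a
    exact ⟨n.card + m.card, by rintro _ ⟨b, rfl⟩; exact hf_le a b⟩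
  have hbdd_outer : BddAbove (Set.range (fun a => ⨆ b, f a b)) := by
    refine ⟨n.card + m.card, ?_⟩
    rintro _ ⟨a, rfl⟩
    exact ciSup_le (fun b => hf_le a b)
  have hf_le_dseg : ∀ a b, f a b ≤ dseg n m := by
    intro a b
    rw [hdseg]
    calc f a b ≤ ⨆ b, f a b := le_ciSup (hbdd_inner a) b
      _ ≤ ⨆ a, ⨆ b, f a b := le_ciSup hbdd_outer a
  -- (i) dseg ≤ 2 * M
  have hdseg_le : dseg n m ≤ 2 * M := by
    rw [hdseg]
    refine ciSup_le fun a => ciSup_le fun b => ?_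
    by_cases hab : a ≤ b + 1
    · rw [hfab, delta_eq n m a b hab]
      calc (T a - T (b+1)).natAbs ≤ (T a).natAbs + (T (b+1)).natAbs :=
          Int.natAbs_sub_le _ _
        _ ≤ M + M := Nat.add_le_add (hTa_le a) (hTa_le (b+1))
        _ = 2 * M := by ring
    · have hicc : Finset.Icc a b = ∅ := Finset.Icc_eq_empty (by omega)
      rw [hfab]
      simp [hicc]
  -- (ii) each |T (nn j)| ≤ dseg, via a large b
  have hT_le_dseg : ∀ j : Fin K, (T (nn j)).natAbs ≤ dseg n m := by
    intro j
    set b₀ : ℕ := u.sup id with hb₀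
    have hfilter_eq : ∀ (s : Finset ℕ), s ⊆ u →
        s.filter (fun c => nn j ≤ c) = s ∩ Finset.Icc (nn j) b₀ := by
      intro s hs
      ext c
      simp only [Finset.mem_filter, Finset.mem_inter, Finset.mem_Icc]
      constructor
      · intro ⟨h1, h2⟩
        exact ⟨h1, h2, Finset.le_sup (f := id) (hs h1)⟩
      · intro ⟨h1, h2, _⟩
        exact ⟨h1, h2⟩
    have : T (nn j) = ((n ∩ Finset.Icc (nn j) b₀).card : ℤ)
        - ((m ∩ Finset.Icc (nn j) b₀).card : ℤ) := by
      rw [hT, Tdiff, hfilter_eq n hsub_n, hfilter_eq m hsub_m]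
    rw [this]
    exact hf_le_dseg (nn j) b₀
  -- relating c0SummingNorm to M and dseg
  set C0 : ℝ := c0SummingNorm ε with hC0
  have habs : ∀ j : Fin K,
      |∑ i ∈ Finset.univ.filter (fun i => j ≤ i), ε i| = ((T (nn j)).natAbs : ℝ) := by
    intro j
    rw [hL1 j, Nat.cast_natAbs, Int.cast_abs]
  have hC0_le_dseg : C0 ≤ (dseg n m : ℝ) := by
    rw [hC0, c0SummingNorm]
    refine ciSup_le fun j => ?_
    rw [habs j]
    exact_mod_cast hT_le_dseg j
  have hM_le_C0 : (M : ℝ) ≤ C0 := by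
    obtain ⟨j, _, hj⟩ := Finset.exists_mem_eq_sup Finset.univ
      (Finset.univ_nonempty) (fun j : Fin K => (T (nn j)).natAbs)
    rw [hM, hj, ← habs j, hC0, c0SummingNorm]
    exact le_ciSup (f := fun j : Fin K =>
      |∑ i ∈ Finset.univ.filter (fun i => j ≤ i), ε i|)
      (Set.Finite.bddAbove (Set.finite_range _)) j
  -- the norm identity
  have hsum_eq : ∑ i, ε i • x (2 * k + nn i)
      = (∑ j ∈ n, x (2 * k + j)) - ∑ j ∈ m, x (2 * k + j) := by
    have hreindex : ∀ (F : ℕ → X), ∑ i, F (nn i) = ∑ c ∈ u, F c := by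
      intro F
      apply Finset.sum_nbij (i := nn)
      · intro i _; exact hnn_mem i
      · intro i _ i' _ h; exact hnn_mono.injective h
      · intro c hc
        obtain ⟨i, rfl⟩ := hnn_surj c hc
        exact ⟨i, Finset.mem_coe.2 (Finset.mem_univ i), rfl⟩
      · intro i _; rfl
    have h1 : ∑ i, ε i • x (2 * k + nn i)
        = ∑ i, ((if nn i ∈ n then x (2 * k + nn i) else 0)
            - (if nn i ∈ m then x (2 * k + nn i) else 0)) := by
      apply Finset.sum_congr rfl
      intro i _
      simp only [hε, sub_smul]
      congr 1 <;> split_ifs <;> simp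
    rw [h1, Finset.sum_sub_distrib,
      hreindex (fun c => if c ∈ n then x (2 * k + c) else 0),
      hreindex (fun c => if c ∈ m then x (2 * k + c) else 0)]
    rw [Finset.sum_ite_mem, Finset.sum_ite_mem,
      Finset.inter_eq_right.2 hsub_n, Finset.inter_eq_right.2 hsub_m]
  -- apply the spreading hypothesis
  have hK2k : K ≤ 2 * k := by
    calc K = (n ∪ m).card := hK
      _ ≤ n.card + m.card := Finset.card_union_le n m
      _ = 2 * k := by rw [hn, hm]; ring
  have hspread' := hspread K (fun i => 2 * k + nn i) ε
    (fun i j hij => by exact Nat.add_lt_add_left (hnn_mono hij) _)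
    (fun i => le_trans hK2k (Nat.le_add_right _ _))
    hεval
  rw [hsum_eq] at hspread'
  obtain ⟨hlow, hhigh⟩ := hspread'
  have hstep1 : (A / 2) * (dseg n m : ℝ) ≤ (A / 2) * ((2 * M : ℕ) : ℝ) :=
    mul_le_mul_of_nonneg_left (by exact_mod_cast hdseg_le) (by positivity)
  constructor
  · calc (A / 2) * (dseg n m : ℝ) ≤ (A / 2) * ((2 * M : ℕ) : ℝ) := hstep1
      _ = A * M := by push_cast; ring
      _ ≤ A * C0 := mul_le_mul_of_nonneg_left hM_le_C0 hA.le
      _ ≤ _ := hlow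
  · calc ‖(∑ j ∈ n, x (2 * k + j)) - ∑ j ∈ m, x (2 * k + j)‖ ≤ B * C0 := hhigh
      _ ≤ B * (dseg n m : ℝ) := mul_le_mul_of_nonneg_left hC0_le_dseg hB.le
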